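/- One-step drift bound for ‖q‖² under MaxWeight (equation (11) in the proof of Proposition 4.2). Fix n ≥ 1, ν ∈ F with ν_min := min_{ij} ν_{ij} > 0, and 0 < ε < 1, with arrival means λ_{ij} = (1−ε)ν_{ij} and variances σ_{ij}². Fix a deterministic state q ∈ ℕ^{n×n}, let s(q) ∈ argmax_{s ∈ S*} ∑_{ij} q_{ij} s_{ij} be a MaxWeight schedule, let a be one arrival matrix, and let q⁺_{ij} = max(q_{ij} + a_{ij} − s_{ij}(q), 0). Then E[‖q⁺‖²] − ‖q‖² ≤ ‖λ‖² + ‖σ‖² + n − 2ε·⟨q, ν⟩ − 2ν_min·‖q_⊥‖, where the expectation is over the arrival matrix a, ‖λ‖² = ∑_{ij} λ_{ij}², ‖σ‖² = ∑_{ij} σ_{ij}², and q_⊥ is the residual of the projection of q (viewed in ℝ^{n×n}) onto the cone K. -/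

import Mathlib

open scoped BigOperators ENNReal

namespace SwitchModel

/-- Next queue state: `q⁺_{ij} = max(q_{ij} + a_{ij} − s_{ij}, 0)` (truncated `ℕ` subtraction). -/
def nextQ (n : ℕ) (q a s : Fin n → Fin n → ℕ) : Fin n → Fin n → ℕ :=
  fun i j => q i j + a i j - s i j

/-- A 0–1 matrix with at most one 1 per row and per column. -/
def IsSchedule (n : ℕ) (s : Fin n → Fin n → ℕ) : Prop :=
  (∀ i j, s i j ≤ 1) ∧ (∀ i, (∑ j, s i j) ≤ 1) ∧ (∀ j, (∑ i, s i j) ≤ 1)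

/-- A permutation matrix: exactly one 1 per row and per column. -/
def IsPerm (n : ℕ) (s : Fin n → Fin n → ℕ) : Prop :=
  (∀ i j, s i j ≤ 1) ∧ (∀ i, (∑ j, s i j) = 1) ∧ (∀ j, (∑ i, s i j) = 1)

/-- MaxWeight selection: `sched q` is a permutation matrix maximizing `∑ q_{ij} s_{ij}`. -/
def IsMaxWeight (n : ℕ) (sched : (Fin n → Fin n → ℕ) → (Fin n → Fin n → ℕ)) : Prop :=
  ∀ q, IsPerm n (sched q) ∧
    ∀ s, IsPerm n s → (∑ i, ∑ j, q i j * s i j) ≤ (∑ i, ∑ j, q i j * sched q i j)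

/-- Joint arrival probability: the entries are mutually independent with marginals `A i j`. -/
noncomputable def jointA (n : ℕ) (A : Fin n → Fin n → ℕ → ℝ≥0∞) (a : Fin n → Fin n → ℕ) : ℝ≥0∞ :=
  ∏ i, ∏ j, A i j (a i j)

/-- `A i j` is a probability distribution on `ℕ` supported on `[0, amax]`,
with mean `lam i j` and variance `(sig i j)^2`. -/
def ArrivalDist (n : ℕ) (A : Fin n → Fin n → ℕ → ℝ≥0∞)
    (lam sig : Fin n → Fin n → ℝ) (amax : ℕ) : Prop :=
  (∀ i j, (∑' k : ℕ, A i j k) = 1) ∧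
  (∀ i j k, A i j k ≠ 0 → k ≤ amax) ∧
  (∀ i j, (∑' k : ℕ, (A i j k).toReal * (k : ℝ)) = lam i j) ∧
  (∀ i j, (∑' k : ℕ, (A i j k).toReal * ((k : ℝ) - lam i j) ^ 2) = (sig i j) ^ 2)

/-- Transition kernel of the switch under a deterministic scheduling map `sched`. -/
noncomputable def kernelMW (n : ℕ) (A : Fin n → Fin n → ℕ → ℝ≥0∞)
    (sched : (Fin n → Fin n → ℕ) → (Fin n → Fin n → ℕ))
    (q q' : Fin n → Fin n → ℕ) : ℝ≥0∞ :=
  ∑' a : Fin n → Fin n → ℕ, jointA n A a * (if nextQ n q a (sched q) = q' then 1 else 0)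

/-- Transition kernel of the switch under a randomized scheduling policy `pol`
(the schedule is chosen independently of the current arrivals). -/
noncomputable def kernelPol (n : ℕ) (A : Fin n → Fin n → ℕ → ℝ≥0∞)
    (pol : (Fin n → Fin n → ℕ) → (Fin n → Fin n → ℕ) → ℝ≥0∞)
    (q q' : Fin n → Fin n → ℕ) : ℝ≥0∞ :=
  ∑' a : Fin n → Fin n → ℕ, ∑' s : Fin n → Fin n → ℕ,
    jointA n A a * pol q s * (if nextQ n q a s = q' then 1 else 0)

/-- `pd` is an invariant (stationary) probability distribution of the kernel `P`. -/
def IsInvariant (n : ℕ)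
    (P : (Fin n → Fin n → ℕ) → (Fin n → Fin n → ℕ) → ℝ≥0∞)
    (pd : (Fin n → Fin n → ℕ) → ℝ≥0∞) : Prop :=
  (∑' q : Fin n → Fin n → ℕ, pd q) = 1 ∧
  ∀ q', (∑' q : Fin n → Fin n → ℕ, pd q * P q q') = pd q'

/-- The face `F`: nonnegative matrices with all row and column sums equal to 1. -/
def memF (n : ℕ) (ν : Fin n → Fin n → ℝ) : Prop :=
  (∀ i j, 0 ≤ ν i j) ∧ (∀ i, (∑ j, ν i j) = 1) ∧ (∀ j, (∑ i, ν i j) = 1)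

/-- Steady-state expectation of the total queue length `∑_{ij} q_{ij}`. -/
noncomputable def Etot (n : ℕ) (pd : (Fin n → Fin n → ℕ) → ℝ≥0∞) : ℝ≥0∞ :=
  ∑' q : Fin n → Fin n → ℕ, pd q * (∑ i, ∑ j, (q i j : ℝ≥0∞))

/-- Steady-state expectation of `(∑_{ij} q_{ij})²`. -/
noncomputable def Etot2 (n : ℕ) (pd : (Fin n → Fin n → ℕ) → ℝ≥0∞) : ℝ≥0∞ :=
  ∑' q : Fin n → Fin n → ℕ, pd q * (∑ i, ∑ j, (q i j : ℝ≥0∞)) ^ 2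

/-- Euclidean norm on `ℝ^{n×n}`. -/
noncomputable def normE (n : ℕ) (x : Fin n → Fin n → ℝ) : ℝ :=
  Real.sqrt (∑ i, ∑ j, x i j ^ 2)

/-- The cone `K = {x : x_{ij} = w_i + w̃_j, w, w̃ ≥ 0}`. -/
def coneK (n : ℕ) : Set (Fin n → Fin n → ℝ) :=
  {x | ∃ w wt : Fin n → ℝ, (∀ i, 0 ≤ w i) ∧ (∀ j, 0 ≤ wt j) ∧ ∀ i j, x i j = w i + wt j}

/-- Embedding of queue states into `ℝ^{n×n}`. -/
def toR (n : ℕ) (q : Fin n → Fin n → ℕ) : Fin n → Fin n → ℝ :=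
  fun i j => (q i j : ℝ)

/-- `proj` is the nearest-point projection onto the cone `K`. -/
def IsConeProj (n : ℕ) (proj : (Fin n → Fin n → ℝ) → (Fin n → Fin n → ℝ)) : Prop :=
  ∀ x, proj x ∈ coneK n ∧ ∀ y ∈ coneK n, normE n (x - proj x) ≤ normE n (x - y)

/-- Bernoulli distribution on `ℕ` with success probability `p`. -/
noncomputable def bern (p : ℝ) : ℕ → ℝ≥0∞ :=
  fun k => if k = 0 then ENNReal.ofReal (1 - p) else if k = 1 then ENNReal.ofReal p else 0

end SwitchModel

namespace SwitchAux
open Finset SwitchModel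


lemma sum_sq_le_sq {ι : Type*} (s : Finset ι) (f : ι → ℝ) (hf : ∀ i ∈ s, 0 ≤ f i) :
    ∑ i ∈ s, f i ^ 2 ≤ (∑ i ∈ s, f i) ^ 2 := by
  have h : ∀ i ∈ s, f i ^ 2 ≤ f i * ∑ j ∈ s, f j := by
    intro i hi
    have h1 : f i ≤ ∑ j ∈ s, f j := Finset.single_le_sum hf hi
    have := mul_le_mul_of_nonneg_left h1 (hf i hi)
    nlinarith
  calc ∑ i ∈ s, f i ^ 2 ≤ ∑ i ∈ s, f i * ∑ j ∈ s, f j := Finset.sum_le_sum h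
    _ = (∑ i ∈ s, f i) ^ 2 := by rw [← Finset.sum_mul]; ring

lemma egervary (n : ℕ) (q : Fin n → Fin n → ℕ) (M : ℕ)
    (hM : ∀ π : Equiv.Perm (Fin n), (∑ i, q i (π i)) ≤ M) :
    ∃ u v : Fin n → ℤ, (∀ i j, (q i j : ℤ) ≤ u i + v j) ∧
      (∑ i, u i) + (∑ j, v j) ≤ (M : ℤ) := by
  classical
  set P : ℤ → Prop := fun c => ∃ u v : Fin n → ℤ,
    (∀ i j, (q i j : ℤ) ≤ u i + v j) ∧ (∑ i, u i) + (∑ j, v j) = c with hP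
  have Hinh : ∃ c, P c := by
    refine ⟨_, (fun i => ∑ j, (q i j : ℤ)), (fun _ => 0), fun i j => ?_, rfl⟩
    have : (q i j : ℤ) ≤ ∑ j', (q i j' : ℤ) :=
      Finset.single_le_sum (fun _ _ => Int.natCast_nonneg _) (mem_univ j)
    simpa using this
  have Hbdd : ∃ b : ℤ, ∀ c, P c → b ≤ c := by
    refine ⟨0, fun c hc => ?_⟩
    obtain ⟨u, v, hcov, hsum⟩ := hc
    have h1 : (0:ℤ) ≤ ∑ i, (u i + v i) := by
      refine Finset.sum_nonneg fun i _ => le_trans (Int.natCast_nonneg (q i i)) (hcov i i)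
    rw [Finset.sum_add_distrib] at h1
    omega
  obtain ⟨c₀, ⟨u, v, hcov, hsum⟩, hleast⟩ := Int.exists_least_of_bdd Hbdd Hinh
  set t : Fin n → Finset (Fin n) := fun i => univ.filter (fun j => u i + v j = (q i j : ℤ)) with ht
  by_cases hH : ∀ S : Finset (Fin n), S.card ≤ (S.biUnion t).card
  · obtain ⟨f, hfinj, hft⟩ := (Finset.all_card_le_biUnion_card_iff_exists_injective t).mp hH
    have hbij : Function.Bijective f := Finite.injective_iff_bijective.mp hfinj
    have hval : (∑ i, u i) + (∑ j, v j) = ∑ i, (q i (f i) : ℤ) := by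
      have h1 : ∑ j, v j = ∑ i, v (f i) :=
        (Fintype.sum_bijective f hbij _ _ (fun i => rfl)).symm
      rw [h1, ← Finset.sum_add_distrib]
      refine Finset.sum_congr rfl fun i _ => ?_
      have h2 := hft i
      rw [ht] at h2
      simp only [Finset.mem_filter] at h2
      exact h2.2
    refine ⟨u, v, hcov, ?_⟩
    rw [hval]
    have h3 := hM (Equiv.ofBijective f hbij)
    have h4 : (∑ i, q i (f i)) ≤ M := h3
    calc ∑ i, (q i (f i) : ℤ) = ((∑ i, q i (f i) : ℕ) : ℤ) := by push_cast; ring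
      _ ≤ (M : ℤ) := by exact_mod_cast h4
  · push_neg at hH
    obtain ⟨S, hS⟩ := hH
    set N := S.biUnion t with hN
    set u' : Fin n → ℤ := fun i => u i - (if i ∈ S then 1 else 0) with hu'
    set v' : Fin n → ℤ := fun j => v j + (if j ∈ N then 1 else 0) with hv'
    have hcov' : ∀ i j, (q i j : ℤ) ≤ u' i + v' j := by
      intro i j
      have h0 := hcov i j
      by_cases hi : i ∈ S
      · by_cases hj : j ∈ N
        · simp only [hu', hv', if_pos hi, if_pos hj]; omega
        · have hnt : j ∉ t i := fun h => hj (Finset.mem_biUnion.mpr ⟨i, hi, h⟩)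
          have hne : u i + v j ≠ (q i j : ℤ) := by
            intro h; exact hnt (by rw [ht]; simp [h])
          simp only [hu', hv', if_pos hi, if_neg hj]; omega
      · simp only [hu', hv', if_neg hi]
        by_cases hj : j ∈ N <;> simp [hj] <;> omega
    have hsS : ∑ i, (if i ∈ S then (1:ℤ) else 0) = S.card := by
      rw [Finset.sum_ite_mem, Finset.univ_inter]; simp
    have hsN : ∑ j, (if j ∈ N then (1:ℤ) else 0) = N.card := by
      rw [Finset.sum_ite_mem, Finset.univ_inter]; simp
    have hsum' : (∑ i, u' i) + (∑ j, v' j) = c₀ - S.card + N.card := by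
      simp only [hu', hv', Finset.sum_sub_distrib, Finset.sum_add_distrib, hsS, hsN]
      omega
    have hle := hleast _ ⟨u', v', hcov', hsum'⟩
    have hcard : (N.card : ℤ) < S.card := by exact_mod_cast hS
    omega




lemma perm_row (n : ℕ) (π : Equiv.Perm (Fin n)) (i : Fin n) :
    (∑ j, (if j = π i then (1:ℕ) else 0)) = 1 := by simp

lemma perm_col (n : ℕ) (π : Equiv.Perm (Fin n)) (j : Fin n) :
    (∑ i, (if j = π i then (1:ℕ) else 0)) = 1 := by
  have : ∀ i : Fin n, (j = π i) = (i = π.symm j) := by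
    intro i; simp only [eq_iff_iff]
    constructor
    · intro h; rw [h]; simp
    · intro h; rw [h]; simp
  simp only [this]
  simp

lemma sum_mul_permMatrix (n : ℕ) (q : Fin n → Fin n → ℕ) (π : Equiv.Perm (Fin n)) :
    (∑ i, ∑ j, q i j * (if j = π i then 1 else 0)) = ∑ i, q i (π i) := by
  refine Finset.sum_congr rfl fun i _ => ?_
  have : ∀ j, q i j * (if j = π i then 1 else 0) = if j = π i then q i j else 0 := by
    intro j; split <;> simp
  simp only [this]
  simp

-- interchange: sum over the finite set of arrival matrices of a product = product of sums
lemma sum_pi_prod (n m : ℕ) (h : Fin n → Fin n → ℕ → ℝ) :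
    ∑ a ∈ Fintype.piFinset (fun _ : Fin n => Fintype.piFinset
        (fun _ : Fin n => Finset.range m)),
      ∏ i, ∏ j, h i j (a i j)
    = ∏ i, ∏ j, ∑ k ∈ Finset.range m, h i j k := by
  classical
  have inner : ∀ i : Fin n, (∏ j, ∑ k ∈ Finset.range m, h i j k)
      = ∑ b ∈ Fintype.piFinset (fun _ : Fin n => Finset.range m), ∏ j, h i j (b j) :=
    fun i => Finset.prod_univ_sum _ _
  rw [show (∏ i, ∏ j, ∑ k ∈ Finset.range m, h i j k)
      = ∏ i, ∑ b ∈ Fintype.piFinset (fun _ : Fin n => Finset.range m), ∏ j, h i j (b j) from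
      Finset.prod_congr rfl fun i _ => inner i]
  exact (Finset.prod_univ_sum (fun _ : Fin n => Fintype.piFinset (fun _ : Fin n => Finset.range m)) (fun i b => ∏ j, h i j (b j))).symm


lemma prod_ite_one {n : ℕ} (i₀ : Fin n) (g : Fin n → ℝ) :
    (∏ i, (if i = i₀ then g i else 1)) = g i₀ := by
  simp


lemma sum_pi_single (n m : ℕ) (pA : Fin n → Fin n → ℕ → ℝ)
    (hnorm : ∀ i j, (∑ k ∈ Finset.range m, pA i j k) = 1)
    (i₀ j₀ : Fin n) (g : ℕ → ℝ) :
    ∑ a ∈ Fintype.piFinset (fun _ : Fin n => Fintype.piFinset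
        (fun _ : Fin n => Finset.range m)),
      (∏ i, ∏ j, pA i j (a i j)) * g (a i₀ j₀)
    = ∑ k ∈ Finset.range m, pA i₀ j₀ k * g k := by
  classical
  set e : Fin n → Fin n → ℕ → ℝ :=
    fun i j k => if i = i₀ then (if j = j₀ then g k else 1) else 1 with he
  have hsplit : ∀ a : Fin n → Fin n → ℕ,
      (∏ i, ∏ j, pA i j (a i j)) * g (a i₀ j₀)
      = ∏ i, ∏ j, (pA i j (a i j) * e i j (a i j)) := by
    intro a
    simp only [Finset.prod_mul_distrib]
    congr 1
    have hinner : ∀ i : Fin n, (∏ j, e i j (a i j))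
        = if i = i₀ then g (a i j₀) else 1 := by
      intro i
      by_cases hi : i = i₀
      · simp only [he, if_pos hi]
        exact prod_ite_one j₀ (fun j => g (a i j))
      · simp [he, hi]
    rw [show (∏ i, ∏ j, e i j (a i j)) = ∏ i, (if i = i₀ then g (a i j₀) else 1) from
      Finset.prod_congr rfl fun i _ => hinner i]
    exact (prod_ite_one i₀ (fun i => g (a i j₀))).symm
  rw [show (∑ a ∈ Fintype.piFinset (fun _ : Fin n => Fintype.piFinset
        (fun _ : Fin n => Finset.range m)),
      (∏ i, ∏ j, pA i j (a i j)) * g (a i₀ j₀))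
    = ∑ a ∈ Fintype.piFinset (fun _ : Fin n => Fintype.piFinset
        (fun _ : Fin n => Finset.range m)),
      ∏ i, ∏ j, (pA i j (a i j) * e i j (a i j)) from
    Finset.sum_congr rfl fun a _ => hsplit a]
  rw [sum_pi_prod n m (fun i j k => pA i j k * e i j k)]
  have hfact : ∀ i : Fin n, (∏ j, ∑ k ∈ Finset.range m, pA i j k * e i j k)
      = if i = i₀ then (∑ k ∈ Finset.range m, pA i j₀ k * g k) else 1 := by
    intro i
    by_cases hi : i = i₀
    · simp only [if_pos hi]
      have hj : ∀ j : Fin n, (∑ k ∈ Finset.range m, pA i j k * e i j k)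
          = if j = j₀ then (∑ k ∈ Finset.range m, pA i j k * g k) else 1 := by
        intro j
        by_cases hj' : j = j₀
        · simp [he, hi, hj']
        · subst hi; simp [he, hj', hnorm]
      rw [show (∏ j, ∑ k ∈ Finset.range m, pA i j k * e i j k)
          = ∏ j, (if j = j₀ then (∑ k ∈ Finset.range m, pA i j k * g k) else 1) from
        Finset.prod_congr rfl fun j _ => hj j]
      exact prod_ite_one j₀ _
    · have hj : ∀ j : Fin n, (∑ k ∈ Finset.range m, pA i j k * e i j k)
          = 1 := by
        intro j; simp [he, hi, hnorm i j]
      simp [hj, hi]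
  rw [show (∏ i, ∏ j, ∑ k ∈ Finset.range m, pA i j k * e i j k)
      = ∏ i, (if i = i₀ then (∑ k ∈ Finset.range m, pA i j₀ k * g k) else 1) from
    Finset.prod_congr rfl fun i _ => hfact i]
  exact prod_ite_one i₀ _


lemma moment (m : ℕ) (p : ℕ → ℝ) (hp : (∑ k ∈ Finset.range m, p k) = 1)
    (lam sig2 : ℝ) (hm : (∑ k ∈ Finset.range m, p k * k) = lam)
    (hv : (∑ k ∈ Finset.range m, p k * ((k : ℝ) - lam) ^ 2) = sig2) (c : ℝ) :
    (∑ k ∈ Finset.range m, p k * (c + k) ^ 2) = sig2 + (c + lam) ^ 2 := by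
  have h1 : (∑ k ∈ Finset.range m, p k * (c + k) ^ 2)
      = ∑ k ∈ Finset.range m, (p k * ((k : ℝ) - lam) ^ 2
          + (2 * (c + lam)) * (p k * k) + ((c + lam) ^ 2 - 2 * (c + lam) * lam) * p k) :=
    Finset.sum_congr rfl fun k _ => by ring
  rw [h1, Finset.sum_add_distrib, Finset.sum_add_distrib, hv, ← Finset.mul_sum, hm,
    ← Finset.mul_sum, hp]
  ring

lemma nextQ_sq_le (q a s : ℕ) (hs : s ≤ 1) :
    ((q + a - s : ℕ) : ℝ) ^ 2 ≤ ((q : ℝ) + a - s) ^ 2 := by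
  rcases le_or_gt s (q + a) with h | h
  · have h1 : ((q + a - s : ℕ) : ℝ) = (q : ℝ) + a - s := by
      push_cast [h]; ring
    rw [h1]
  · have h1 : q = 0 := by omega
    have h2 : a = 0 := by omega
    have h3 : s = 1 := by omega
    subst h1; subst h2; subst h3
    norm_num

lemma prob_bound (n : ℕ) (amax : ℕ) (A : Fin n → Fin n → ℕ → ℝ≥0∞)
    (hA1 : ∀ i j, (∑' k : ℕ, A i j k) = 1)
    (hA2 : ∀ i j k, A i j k ≠ 0 → k ≤ amax)
    (lam sig : Fin n → Fin n → ℝ)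
    (hA3 : ∀ i j, (∑' k : ℕ, (A i j k).toReal * (k : ℝ)) = lam i j)
    (hA4 : ∀ i j, (∑' k : ℕ, (A i j k).toReal * ((k : ℝ) - lam i j) ^ 2) = (sig i j) ^ 2)
    (q s : Fin n → Fin n → ℕ) (hs01 : ∀ i j, s i j ≤ 1) :
    (∑' a : Fin n → Fin n → ℕ,
        jointA n A a * (∑ i, ∑ j, ((nextQ n q a s i j : ℝ≥0∞)) ^ 2))
    ≤ ENNReal.ofReal (∑ i, ∑ j,
        ((sig i j) ^ 2 + ((q i j : ℝ) - s i j + lam i j) ^ 2)) := by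
  classical
  set m := amax + 1 with hm
  set Φ : Finset (Fin n → Fin n → ℕ) := Fintype.piFinset
    (fun _ : Fin n => Fintype.piFinset (fun _ : Fin n => Finset.range m)) with hΦ
  set pA : Fin n → Fin n → ℕ → ℝ := fun i j k => (A i j k).toReal with hpA
  set g : Fin n → Fin n → ℕ → ℝ := fun i j k => ((q i j : ℝ) + k - s i j) ^ 2 with hg
  set p : (Fin n → Fin n → ℕ) → ℝ := fun a => ∏ i, ∏ j, pA i j (a i j) with hp
  have hgnn : ∀ i j k, 0 ≤ g i j k := by intro i j k; rw [hg]; positivity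
  have hpAnn : ∀ i j k, 0 ≤ pA i j k := fun i j k => ENNReal.toReal_nonneg
  have hpnn : ∀ a, 0 ≤ p a := fun a =>
    Finset.prod_nonneg fun i _ => Finset.prod_nonneg fun j _ => hpAnn i j _
  have hAfin : ∀ i j k, A i j k ≠ ⊤ := fun i j k =>
    ne_top_of_le_ne_top ENNReal.one_ne_top (hA1 i j ▸ ENNReal.le_tsum k)
  have hsupp : ∀ i j k, m ≤ k → A i j k = 0 := by
    intro i j k hk
    by_contra h
    have := hA2 i j k h
    omega
  have hnormE : ∀ i j, (∑ k ∈ Finset.range m, A i j k) = 1 := by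
    intro i j
    rw [← hA1 i j]
    exact (tsum_eq_sum (fun k hk => hsupp i j k (by simpa using Finset.mem_range.not.mp hk))).symm
  have hnorm : ∀ i j, (∑ k ∈ Finset.range m, pA i j k) = 1 := by
    intro i j
    have h2 : (∑ k ∈ Finset.range m, A i j k).toReal = 1 := by rw [hnormE i j]; simp
    rw [ENNReal.toReal_sum (fun k _ => hAfin i j k)] at h2
    exact h2
  have hmean : ∀ i j, (∑ k ∈ Finset.range m, pA i j k * k) = lam i j := by
    intro i j
    rw [← hA3 i j]
    refine (tsum_eq_sum fun k hk => ?_).symm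
    simp only [hpA]
    rw [hsupp i j k (by simpa using Finset.mem_range.not.mp hk)]
    simp
  have hvar : ∀ i j, (∑ k ∈ Finset.range m, pA i j k * ((k : ℝ) - lam i j) ^ 2) = (sig i j) ^ 2 := by
    intro i j
    rw [← hA4 i j]
    refine (tsum_eq_sum fun k hk => ?_).symm
    simp only [hpA]
    rw [hsupp i j k (by simpa using Finset.mem_range.not.mp hk)]
    simp
  -- outside support
  have hzero : ∀ a ∉ Φ, jointA n A a * (∑ i, ∑ j, ((nextQ n q a s i j : ℝ≥0∞)) ^ 2) = 0 := by
    intro a ha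
    have hex : ∃ i j, ¬ a i j ∈ Finset.range m := by
      by_contra hcon
      push_neg at hcon
      refine ha ?_
      rw [hΦ, Fintype.mem_piFinset]
      intro i
      rw [Fintype.mem_piFinset]
      intro j
      exact hcon i j
    obtain ⟨i, j, hij⟩ := hex
    have hA0 : A i j (a i j) = 0 := hsupp i j _ (by simpa using Finset.mem_range.not.mp hij)
    have hj0 : jointA n A a = 0 := by
      refine Finset.prod_eq_zero (Finset.mem_univ i) ?_
      exact Finset.prod_eq_zero (Finset.mem_univ j) hA0
    rw [hj0, zero_mul]
  -- per-a bound
  have hperA : ∀ a, jointA n A a * (∑ i, ∑ j, ((nextQ n q a s i j : ℝ≥0∞)) ^ 2)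
      ≤ ENNReal.ofReal (p a * (∑ i, ∑ j, g i j (a i j))) := by
    intro a
    have h2 : ∀ i j, ENNReal.ofReal (pA i j (a i j)) = A i j (a i j) := fun i j => by
      rw [hpA]; exact ENNReal.ofReal_toReal (hAfin i j _)
    have hjoint : jointA n A a = ENNReal.ofReal (p a) := by
      calc jointA n A a = ∏ i, ∏ j, A i j (a i j) := rfl
        _ = ∏ i, ∏ j, ENNReal.ofReal (pA i j (a i j)) :=
          Finset.prod_congr rfl fun i _ => Finset.prod_congr rfl fun j _ => (h2 i j).symm
        _ = ∏ i, ENNReal.ofReal (∏ j, pA i j (a i j)) :=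
          (Finset.prod_congr rfl fun i _ =>
            (ENNReal.ofReal_prod_of_nonneg (fun j _ => hpAnn i j _)).symm)
        _ = ENNReal.ofReal (p a) := by
          rw [hp]
          exact (ENNReal.ofReal_prod_of_nonneg (fun i _ =>
            Finset.prod_nonneg fun j _ => hpAnn i j _)).symm
    have hterm : ∀ i j, ((nextQ n q a s i j : ℝ≥0∞)) ^ 2 ≤ ENNReal.ofReal (g i j (a i j)) := by
      intro i j
      have h3 : ((nextQ n q a s i j : ℝ≥0∞)) ^ 2
          = ENNReal.ofReal (((nextQ n q a s i j : ℕ) : ℝ) ^ 2) := by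
        rw [ENNReal.ofReal_pow (Nat.cast_nonneg _), ENNReal.ofReal_natCast]
      rw [h3]
      apply ENNReal.ofReal_le_ofReal
      have h4 : nextQ n q a s i j = q i j + a i j - s i j := rfl
      rw [h4, hg]
      exact nextQ_sq_le (q i j) (a i j) (s i j) (hs01 i j)
    have hWa : (∑ i, ∑ j, ((nextQ n q a s i j : ℝ≥0∞)) ^ 2)
        ≤ ENNReal.ofReal (∑ i, ∑ j, g i j (a i j)) := by
      calc (∑ i, ∑ j, ((nextQ n q a s i j : ℝ≥0∞)) ^ 2)
          ≤ ∑ i, ∑ j, ENNReal.ofReal (g i j (a i j)) :=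
            Finset.sum_le_sum fun i _ => Finset.sum_le_sum fun j _ => hterm i j
        _ = ENNReal.ofReal (∑ i, ∑ j, g i j (a i j)) := by
            rw [ENNReal.ofReal_sum_of_nonneg
              (fun i _ => Finset.sum_nonneg fun j _ => hgnn i j _)]
            exact Finset.sum_congr rfl fun i _ =>
              (ENNReal.ofReal_sum_of_nonneg (fun j _ => hgnn i j _)).symm
    calc jointA n A a * (∑ i, ∑ j, ((nextQ n q a s i j : ℝ≥0∞)) ^ 2)
        ≤ jointA n A a * ENNReal.ofReal (∑ i, ∑ j, g i j (a i j)) := mul_le_mul_right hWa _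
      _ = ENNReal.ofReal (p a) * ENNReal.ofReal (∑ i, ∑ j, g i j (a i j)) := by rw [hjoint]
      _ = ENNReal.ofReal (p a * (∑ i, ∑ j, g i j (a i j))) :=
          (ENNReal.ofReal_mul (hpnn a)).symm
  -- sum bound
  have hT : (∑' a : Fin n → Fin n → ℕ,
        jointA n A a * (∑ i, ∑ j, ((nextQ n q a s i j : ℝ≥0∞)) ^ 2))
      ≤ ENNReal.ofReal (∑ a ∈ Φ, p a * (∑ i, ∑ j, g i j (a i j))) := by
    rw [tsum_eq_sum hzero]
    calc (∑ a ∈ Φ, jointA n A a * (∑ i, ∑ j, ((nextQ n q a s i j : ℝ≥0∞)) ^ 2))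
        ≤ ∑ a ∈ Φ, ENNReal.ofReal (p a * (∑ i, ∑ j, g i j (a i j))) :=
          Finset.sum_le_sum fun a _ => hperA a
      _ = ENNReal.ofReal (∑ a ∈ Φ, p a * (∑ i, ∑ j, g i j (a i j))) :=
          (ENNReal.ofReal_sum_of_nonneg fun a _ => mul_nonneg (hpnn a)
            (Finset.sum_nonneg fun i _ => Finset.sum_nonneg fun j _ => hgnn i j _)).symm
  -- identify the expectation
  have hE : (∑ a ∈ Φ, p a * (∑ i, ∑ j, g i j (a i j)))
      = ∑ i, ∑ j, ((sig i j) ^ 2 + ((q i j : ℝ) - s i j + lam i j) ^ 2) := by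
    have h1 : (∑ a ∈ Φ, p a * (∑ i, ∑ j, g i j (a i j)))
        = ∑ a ∈ Φ, ∑ i, ∑ j, p a * g i j (a i j) := by
      refine Finset.sum_congr rfl fun a _ => ?_
      rw [Finset.mul_sum]
      exact Finset.sum_congr rfl fun i _ => Finset.mul_sum _ _ _
    rw [h1, Finset.sum_comm]
    refine Finset.sum_congr rfl fun i _ => ?_
    rw [Finset.sum_comm]
    refine Finset.sum_congr rfl fun j _ => ?_
    have h2 : (∑ a ∈ Φ, p a * g i j (a i j))
        = ∑ k ∈ Finset.range m, pA i j k * g i j k := by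
      rw [hΦ, hp]
      exact sum_pi_single n m pA hnorm i j (g i j)
    rw [h2]
    have h3 : (∑ k ∈ Finset.range m, pA i j k * g i j k)
        = ∑ k ∈ Finset.range m, pA i j k * (((q i j : ℝ) - s i j) + k) ^ 2 := by
      refine Finset.sum_congr rfl fun k _ => ?_
      rw [hg]
      ring_nf
    rw [h3, moment m (pA i j) (hnorm i j) (lam i j) ((sig i j) ^ 2) (hmean i j) (hvar i j)]
  calc (∑' a : Fin n → Fin n → ℕ,
        jointA n A a * (∑ i, ∑ j, ((nextQ n q a s i j : ℝ≥0∞)) ^ 2))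
      ≤ ENNReal.ofReal (∑ a ∈ Φ, p a * (∑ i, ∑ j, g i j (a i j))) := hT
    _ = ENNReal.ofReal (∑ i, ∑ j, ((sig i j) ^ 2 + ((q i j : ℝ) - s i j + lam i j) ^ 2)) := by
        rw [hE]


/-- Deterministic key inequality chunk. -/
lemma det_key (n : ℕ) (hn : 1 ≤ n)
    (ν : Fin n → Fin n → ℝ) (hν : memF n ν)
    (νmin : ℝ) (hνmin : IsLeast {x : ℝ | ∃ i j : Fin n, ν i j = x} νmin)
    (hνminpos : 0 < νmin)
    (q : Fin n → Fin n → ℕ) (M : ℕ)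
    (u v : Fin n → ℤ) (hcov : ∀ i j, (q i j : ℤ) ≤ u i + v j)
    (hUM : (∑ i, u i) + (∑ j, v j) ≤ (M : ℤ))
    (qpar : Fin n → Fin n → ℝ)
    (hpar : qpar ∈ coneK n ∧ ∀ y ∈ coneK n, normE n (toR n q - qpar) ≤ normE n (toR n q - y)) :
    (∑ i, ∑ j, (q i j : ℝ) * ν i j) + νmin * normE n (toR n q - qpar) ≤ (M : ℝ) := by
  classical
  have hlb : ∀ i j, νmin ≤ ν i j := fun i j => hνmin.2 ⟨i, j, rfl⟩
  have hnν : (n : ℝ) * νmin ≤ 1 := by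
    obtain ⟨i₀, j₀, hij⟩ := hνmin.1
    have h1 : (∑ j, νmin) ≤ ∑ j, ν i₀ j := Finset.sum_le_sum fun j _ => hlb i₀ j
    rw [hν.2.1 i₀] at h1
    simpa [Finset.sum_const, Finset.card_univ, mul_comm] using h1
  -- shift u,v to nonnegative
  obtain ⟨j₀, -, hj₀⟩ := Finset.exists_min_image Finset.univ v ⟨⟨0, hn⟩, Finset.mem_univ _⟩
  set w : Fin n → ℝ := fun i => ((u i + v j₀ : ℤ) : ℝ) with hw
  set wt : Fin n → ℝ := fun j => ((v j - v j₀ : ℤ) : ℝ) with hwt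
  have hwnn : ∀ i, 0 ≤ w i := by
    intro i
    have h2 : ((q i j₀ : ℕ) : ℝ) ≤ (u i : ℝ) + (v j₀ : ℝ) := by exact_mod_cast hcov i j₀
    have h3 : (0:ℝ) ≤ ((q i j₀ : ℕ) : ℝ) := Nat.cast_nonneg _
    rw [hw]; push_cast; linarith
  have hwtnn : ∀ j, 0 ≤ wt j := by
    intro j
    have h2 : ((v j₀ : ℤ) : ℝ) ≤ ((v j : ℤ) : ℝ) := by exact_mod_cast hj₀ j (Finset.mem_univ j)
    rw [hwt]; push_cast; linarith
  set x : Fin n → Fin n → ℝ := fun i j => w i + wt j with hxdef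
  have hxK : x ∈ coneK n := ⟨w, wt, hwnn, hwtnn, fun i j => rfl⟩
  have hxuv : ∀ i j, x i j = (u i : ℝ) + (v j : ℝ) := by
    intro i j; rw [hxdef]; simp only [hw, hwt]; push_cast; ring
  set U : ℝ := (∑ i, (u i : ℝ)) + (∑ j, (v j : ℝ)) with hU
  set Sq : ℝ := ∑ i, ∑ j, (q i j : ℝ) with hSq
  set d : Fin n → Fin n → ℝ := fun i j => (u i : ℝ) + (v j : ℝ) - (q i j : ℝ) with hd
  have hdnn : ∀ i j, 0 ≤ d i j := by
    intro i j
    have h2 : ((q i j : ℕ) : ℝ) ≤ (u i : ℝ) + (v j : ℝ) := by exact_mod_cast hcov i j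
    rw [hd]; push_cast; linarith
  -- distance bound
  have hdist : normE n (toR n q - qpar) ≤ (n : ℝ) * U - Sq := by
    have h1 : normE n (toR n q - qpar) ≤ normE n (toR n q - x) := hpar.2 x hxK
    have h2 : normE n (toR n q - x) = Real.sqrt (∑ i, ∑ j, d i j ^ 2) := by
      unfold normE
      congr 1
      refine Finset.sum_congr rfl fun i _ => Finset.sum_congr rfl fun j _ => ?_
      have h7 : (toR n q - x) i j = -(d i j) := by
        have h8 : (toR n q - x) i j = (q i j : ℝ) - x i j := rfl
        rw [h8, hxuv i j, hd]; ring
      rw [h7]; ring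
    have h3 : (∑ i, ∑ j, d i j ^ 2) ≤ (∑ i, ∑ j, d i j) ^ 2 := by
      calc ∑ i, ∑ j, d i j ^ 2 ≤ ∑ i, (∑ j, d i j) ^ 2 :=
            Finset.sum_le_sum fun i _ => sum_sq_le_sq _ _ (fun j _ => hdnn i j)
        _ ≤ (∑ i, ∑ j, d i j) ^ 2 :=
            sum_sq_le_sq _ _ (fun i _ => Finset.sum_nonneg fun j _ => hdnn i j)
    have h4 : Real.sqrt (∑ i, ∑ j, d i j ^ 2) ≤ ∑ i, ∑ j, d i j := by
      have h5 : (0:ℝ) ≤ ∑ i, ∑ j, d i j :=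
        Finset.sum_nonneg fun i _ => Finset.sum_nonneg fun j _ => hdnn i j
      calc Real.sqrt (∑ i, ∑ j, d i j ^ 2) ≤ Real.sqrt ((∑ i, ∑ j, d i j) ^ 2) :=
            Real.sqrt_le_sqrt h3
        _ = |∑ i, ∑ j, d i j| := Real.sqrt_sq_eq_abs _
        _ = ∑ i, ∑ j, d i j := abs_of_nonneg h5
    have h6 : (∑ i, ∑ j, d i j) = (n : ℝ) * U - Sq := by
      rw [hd, hSq, hU]
      simp only [Finset.sum_sub_distrib, Finset.sum_add_distrib, Finset.sum_const,
        Finset.card_univ, Fintype.card_fin, nsmul_eq_mul]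
      rw [← Finset.mul_sum]; ring
    calc normE n (toR n q - qpar) ≤ Real.sqrt (∑ i, ∑ j, d i j ^ 2) := by rw [← h2]; exact h1
      _ ≤ ∑ i, ∑ j, d i j := h4
      _ = (n : ℝ) * U - Sq := h6
  -- U ≤ M
  have hUMr : U ≤ (M : ℝ) := by
    rw [hU]; exact_mod_cast hUM
  -- qv bound
  have hqv : (∑ i, ∑ j, (q i j : ℝ) * ν i j) ≤ (1 - n * νmin) * U + νmin * Sq := by
    have h1 : ∀ i j, (q i j : ℝ) * ν i j ≤ ((u i : ℝ) + v j) * (ν i j - νmin) + νmin * (q i j : ℝ) := by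
      intro i j
      have hc : (q i j : ℝ) ≤ (u i : ℝ) + v j := by exact_mod_cast hcov i j
      have hν' : 0 ≤ ν i j - νmin := by linarith [hlb i j]
      nlinarith [hc, hν']
    have h2 : (∑ i, ∑ j, (q i j : ℝ) * ν i j)
        ≤ ∑ i, ∑ j, (((u i : ℝ) + v j) * (ν i j - νmin) + νmin * (q i j : ℝ)) :=
      Finset.sum_le_sum fun i _ => Finset.sum_le_sum fun j _ => h1 i j
    have h3 : (∑ i, ∑ j, (((u i : ℝ) + v j) * (ν i j - νmin) + νmin * (q i j : ℝ)))
        = (1 - n * νmin) * U + νmin * Sq := by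
      have hrow : ∀ i, (∑ j, (ν i j - νmin)) = 1 - n * νmin := by
        intro i
        rw [Finset.sum_sub_distrib, hν.2.1 i]
        simp [Finset.sum_const, Finset.card_univ, mul_comm]
      have hcol : ∀ j, (∑ i, (ν i j - νmin)) = 1 - n * νmin := by
        intro j
        rw [Finset.sum_sub_distrib, hν.2.2 j]
        simp [Finset.sum_const, Finset.card_univ, mul_comm]
      have expand : ∀ i j, ((u i : ℝ) + v j) * (ν i j - νmin) + νmin * (q i j : ℝ)
          = (u i : ℝ) * (ν i j - νmin) + (v j : ℝ) * (ν i j - νmin) + νmin * (q i j : ℝ) := by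
        intro i j; ring
      have e1 : (∑ i, ∑ j, (u i : ℝ) * (ν i j - νmin)) = (1 - n * νmin) * (∑ i, (u i : ℝ)) := by
        calc (∑ i, ∑ j, (u i : ℝ) * (ν i j - νmin))
            = ∑ i, (u i : ℝ) * (1 - n * νmin) :=
              Finset.sum_congr rfl fun i _ => by rw [← Finset.mul_sum, hrow i]
          _ = (1 - n * νmin) * (∑ i, (u i : ℝ)) := by rw [← Finset.sum_mul]; ring
      have e2 : (∑ i, ∑ j, (v j : ℝ) * (ν i j - νmin)) = (1 - n * νmin) * (∑ j, (v j : ℝ)) := by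
        rw [Finset.sum_comm]
        calc (∑ j, ∑ i, (v j : ℝ) * (ν i j - νmin))
            = ∑ j, (v j : ℝ) * (1 - n * νmin) :=
              Finset.sum_congr rfl fun j _ => by rw [← Finset.mul_sum, hcol j]
          _ = (1 - n * νmin) * (∑ j, (v j : ℝ)) := by rw [← Finset.sum_mul]; ring
      have e3 : (∑ i, ∑ j, νmin * (q i j : ℝ)) = νmin * Sq := by
        rw [hSq, Finset.mul_sum]
        exact Finset.sum_congr rfl fun i _ => (Finset.mul_sum _ _ _).symm
      simp only [expand, Finset.sum_add_distrib]
      rw [e1, e2, e3, hU]; ring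
    calc (∑ i, ∑ j, (q i j : ℝ) * ν i j)
        ≤ ∑ i, ∑ j, (((u i : ℝ) + v j) * (ν i j - νmin) + νmin * (q i j : ℝ)) := h2
      _ = (1 - n * νmin) * U + νmin * Sq := h3
  -- combine
  have h7 := mul_le_mul_of_nonneg_left hdist hνminpos.le
  nlinarith [hqv, hUMr, h7]

end SwitchAux


open SwitchModel

/-- equation (11) in the proof of Proposition 4.2: one-step drift bound
for `‖q‖²` under a MaxWeight schedule.  The inequality
`E[‖q⁺‖²] − ‖q‖² ≤ ‖λ‖² + ‖σ‖² + n − 2ε⟨q,ν⟩ − 2ν_min‖q_⊥‖`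
is stated in `ℝ≥0∞` with the (nonnegative) negative terms moved to the left side. -/
theorem drift_V_bound
    (n : ℕ) (hn : 1 ≤ n)
    (ν : Fin n → Fin n → ℝ) (hν : memF n ν)
    (νmin : ℝ) (hνmin : IsLeast {x : ℝ | ∃ i j : Fin n, ν i j = x} νmin)
    (hνminpos : 0 < νmin)
    (ε : ℝ) (hε0 : 0 < ε) (hε1 : ε < 1)
    (sig : Fin n → Fin n → ℝ) (amax : ℕ) (hamax : 1 ≤ amax)
    (A : Fin n → Fin n → ℕ → ℝ≥0∞)
    (hA : ArrivalDist n A (fun i j => (1 - ε) * ν i j) sig amax)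
    (q : Fin n → Fin n → ℕ) (s : Fin n → Fin n → ℕ)
    (hs : IsPerm n s ∧ ∀ s', IsPerm n s' →
      (∑ i, ∑ j, q i j * s' i j) ≤ (∑ i, ∑ j, q i j * s i j))
    (qpar : Fin n → Fin n → ℝ)
    (hpar : qpar ∈ coneK n ∧ ∀ y ∈ coneK n, normE n (toR n q - qpar) ≤ normE n (toR n q - y)) :
    (∑' a : Fin n → Fin n → ℕ,
        jointA n A a * (∑ i, ∑ j, ((nextQ n q a s i j : ℝ≥0∞)) ^ 2))
      + ENNReal.ofReal (2 * ε * (∑ i, ∑ j, (q i j : ℝ) * ν i j)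
          + 2 * νmin * normE n (toR n q - qpar))
    ≤ ENNReal.ofReal ((∑ i, ∑ j, ((q i j : ℝ)) ^ 2)
        + (∑ i, ∑ j, ((1 - ε) * ν i j) ^ 2) + (∑ i, ∑ j, (sig i j) ^ 2) + n) := by
  classical
  obtain ⟨⟨hs01, hsrow, hscol⟩, hsmax⟩ := hs
  have hνnn : ∀ i j, 0 ≤ ν i j := hν.1
  -- MaxWeight dominates all permutations
  have hMax : ∀ π : Equiv.Perm (Fin n), (∑ i, q i (π i)) ≤ ∑ i, ∑ j, q i j * s i j := by
    intro π
    have hperm : IsPerm n (fun i j => if j = π i then 1 else 0) := by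
      refine ⟨by intro i j; by_cases h : j = π i <;> simp [h],
        SwitchAux.perm_row n π, SwitchAux.perm_col n π⟩
    have h2 := hsmax _ hperm
    rwa [SwitchAux.sum_mul_permMatrix n q π] at h2
  obtain ⟨u, v, hcov, hUM⟩ := SwitchAux.egervary n q (∑ i, ∑ j, q i j * s i j) hMax
  have hkey := SwitchAux.det_key n hn ν hν νmin hνmin hνminpos q
    (∑ i, ∑ j, q i j * s i j) u v hcov hUM qpar hpar
  obtain ⟨hA1, hA2, hA3, hA4⟩ := hA
  have hprob := SwitchAux.prob_bound n amax A hA1 hA2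
    (fun i j => (1 - ε) * ν i j) sig hA3 hA4 q s hs01
  -- abbreviations
  have hNQnn : 0 ≤ normE n (toR n q - qpar) := Real.sqrt_nonneg _
  have hqvnn : 0 ≤ ∑ i, ∑ j, (q i j : ℝ) * ν i j :=
    Finset.sum_nonneg fun i _ => Finset.sum_nonneg fun j _ =>
      mul_nonneg (Nat.cast_nonneg _) (hνnn i j)
  have hBnn : 0 ≤ 2 * ε * (∑ i, ∑ j, (q i j : ℝ) * ν i j)
      + 2 * νmin * normE n (toR n q - qpar) := by
    have h1 : (0:ℝ) ≤ 2 * ε := by linarith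
    have h2 : (0:ℝ) ≤ 2 * νmin := by linarith
    have := mul_nonneg h1 hqvnn
    have := mul_nonneg h2 hNQnn
    linarith
  have hE1nn : 0 ≤ ∑ i, ∑ j,
      ((sig i j) ^ 2 + ((q i j : ℝ) - s i j + (1 - ε) * ν i j) ^ 2) :=
    Finset.sum_nonneg fun i _ => Finset.sum_nonneg fun j _ => by positivity
  -- component facts for the real inequality
  have hQs : (∑ i, ∑ j, (q i j : ℝ) * (s i j : ℝ))
      = ((∑ i, ∑ j, q i j * s i j : ℕ) : ℝ) := by push_cast; ring
  have hSs2 : (∑ i, ∑ j, ((s i j : ℝ)) ^ 2) ≤ (n : ℝ) := by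
    have per : ∀ i j, ((s i j : ℝ)) ^ 2 ≤ (s i j : ℝ) := by
      intro i j
      have h := hs01 i j
      have h2 : s i j = 0 ∨ s i j = 1 := by omega
      rcases h2 with h2 | h2 <;> rw [h2] <;> norm_num
    have hsum : (∑ i, ∑ j, (s i j : ℝ)) = (n : ℝ) := by
      have hr : ∀ i : Fin n, (∑ j, (s i j : ℝ)) = 1 := fun i => by
        exact_mod_cast hsrow i
      rw [Finset.sum_congr rfl fun i _ => hr i]
      simp
    calc (∑ i, ∑ j, ((s i j : ℝ)) ^ 2) ≤ ∑ i, ∑ j, (s i j : ℝ) :=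
          Finset.sum_le_sum fun i _ => Finset.sum_le_sum fun j _ => per i j
      _ = (n : ℝ) := hsum
  have hSsl : 0 ≤ ∑ i, ∑ j, (s i j : ℝ) * ((1 - ε) * ν i j) := by
    refine Finset.sum_nonneg fun i _ => Finset.sum_nonneg fun j _ => ?_
    have : (0:ℝ) ≤ (1 - ε) * ν i j := mul_nonneg (by linarith) (hνnn i j)
    exact mul_nonneg (Nat.cast_nonneg _) this
  have e1 : (∑ i, ∑ j, ((q i j : ℝ) - s i j + (1 - ε) * ν i j) ^ 2)
      = (∑ i, ∑ j, ((q i j : ℝ)) ^ 2) + (∑ i, ∑ j, ((1 - ε) * ν i j) ^ 2)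
        + (∑ i, ∑ j, ((s i j : ℝ)) ^ 2)
        + (2 * (1 - ε)) * (∑ i, ∑ j, (q i j : ℝ) * ν i j)
        - 2 * (∑ i, ∑ j, (q i j : ℝ) * (s i j : ℝ))
        - 2 * (∑ i, ∑ j, (s i j : ℝ) * ((1 - ε) * ν i j)) := by
    have e0 : ∀ i : Fin n, ∀ j : Fin n,
        ((q i j : ℝ) - s i j + (1 - ε) * ν i j) ^ 2
        = ((q i j : ℝ)) ^ 2 + ((1 - ε) * ν i j) ^ 2 + ((s i j : ℝ)) ^ 2
          + (2 * (1 - ε)) * ((q i j : ℝ) * ν i j)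
          - 2 * ((q i j : ℝ) * (s i j : ℝ))
          - 2 * ((s i j : ℝ) * ((1 - ε) * ν i j)) := fun i j => by ring
    rw [Finset.sum_congr rfl fun i _ => Finset.sum_congr rfl fun j _ => e0 i j]
    simp only [Finset.sum_add_distrib, Finset.sum_sub_distrib, ← Finset.mul_sum]
  -- the final real inequality
  have hreal : (∑ i, ∑ j,
        ((sig i j) ^ 2 + ((q i j : ℝ) - s i j + (1 - ε) * ν i j) ^ 2))
      + (2 * ε * (∑ i, ∑ j, (q i j : ℝ) * ν i j)
          + 2 * νmin * normE n (toR n q - qpar))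
      ≤ (∑ i, ∑ j, ((q i j : ℝ)) ^ 2) + (∑ i, ∑ j, ((1 - ε) * ν i j) ^ 2)
        + (∑ i, ∑ j, (sig i j) ^ 2) + n := by
    have hsplit : (∑ i, ∑ j,
        ((sig i j) ^ 2 + ((q i j : ℝ) - s i j + (1 - ε) * ν i j) ^ 2))
        = (∑ i, ∑ j, (sig i j) ^ 2)
          + ∑ i, ∑ j, ((q i j : ℝ) - s i j + (1 - ε) * ν i j) ^ 2 := by
      simp only [Finset.sum_add_distrib]
    rw [hsplit, e1]
    rw [← hQs] at hkey
    linarith [hkey, hSs2, hSsl]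
  -- put everything together in ℝ≥0∞
  calc (∑' a : Fin n → Fin n → ℕ,
        jointA n A a * (∑ i, ∑ j, ((nextQ n q a s i j : ℝ≥0∞)) ^ 2))
      + ENNReal.ofReal (2 * ε * (∑ i, ∑ j, (q i j : ℝ) * ν i j)
          + 2 * νmin * normE n (toR n q - qpar))
      ≤ ENNReal.ofReal (∑ i, ∑ j,
          ((sig i j) ^ 2 + ((q i j : ℝ) - s i j + (1 - ε) * ν i j) ^ 2))
        + ENNReal.ofReal (2 * ε * (∑ i, ∑ j, (q i j : ℝ) * ν i j)
          + 2 * νmin * normE n (toR n q - qpar)) := add_le_add_left hprob _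
    _ = ENNReal.ofReal ((∑ i, ∑ j,
          ((sig i j) ^ 2 + ((q i j : ℝ) - s i j + (1 - ε) * ν i j) ^ 2))
        + (2 * ε * (∑ i, ∑ j, (q i j : ℝ) * ν i j)
          + 2 * νmin * normE n (toR n q - qpar))) :=
        (ENNReal.ofReal_add hE1nn hBnn).symm
    _ ≤ ENNReal.ofReal ((∑ i, ∑ j, ((q i j : ℝ)) ^ 2)
        + (∑ i, ∑ j, ((1 - ε) * ν i j) ^ 2) + (∑ i, ∑ j, (sig i j) ^ 2) + n) :=
        ENNReal.ofReal_le_ofReal hreal
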